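/- There exist universal constants c₀, c₁ > 0 such that for every finite undirected graph G = (V,E) with m ≥ 2 edges and every φ ∈ (0,1), at least one of the following holds: (1) Φ_G ≥ φ; (2) there exists a partition (A, Ā) of V with Φ_G(Ā) ≤ c₀·φ·(log m)² and min(vol_G(A), vol_G(Ā)) ≥ m/(c₁·(log m)²); or (3) there exists a partition (A, Ā) of V with Φ_G(Ā) ≤ c₀·φ·(log m)², vol_G(Ā) ≤ m/(10·c₀·(log m)²), and A a nearly φ expander in G. -/
import Mathlib


/-!
STATEMENT 4 (Cut-Matching, Theorem 2.2):
There are universal constants `c₀, c₁ > 0` such that for every finite graph `G` with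
`m ≥ 2` edges and every `φ ∈ (0,1)`, one of the following holds:
(1) `Φ_G ≥ φ`;
(2) there is a partition `(A, Ā)` with `Φ_G(Ā) ≤ c₀·φ·(log m)²` and
    `min(vol(A), vol(Ā)) ≥ m/(c₁·(log m)²)`;
(3) there is a partition `(A, Ā)` with `Φ_G(Ā) ≤ c₀·φ·(log m)²`,
    `vol(Ā) ≤ m/(10·c₀·(log m)²)`, and `A` a nearly `φ` expander in `G`.
-/

open Finset

noncomputable section
open scoped Classical

/-- `|E_G(S,T)|`: the number of edges of `G` with one endpoint in `S` and the other in `T`. -/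
def eCount {V : Type*} [Fintype V] [DecidableEq V] (G : SimpleGraph V) (S T : Finset V) : ℕ :=
  ((S ×ˢ T).filter fun p => G.Adj p.1 p.2).card

/-- `vol_G(S) = ∑_{v ∈ S} deg_G(v)`. -/
def vol {V : Type*} [Fintype V] [DecidableEq V] (G : SimpleGraph V) (S : Finset V) : ℕ :=
  ∑ v ∈ S, G.degree v

lemma eCount_comm {V : Type*} [Fintype V] [DecidableEq V] (G : SimpleGraph V) (S T : Finset V) :
    eCount G S T = eCount G T S := by
  unfold eCount
  apply Finset.card_bij (fun p _ => (p.2, p.1))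
  · intro p hp
    simp only [Finset.mem_filter, Finset.mem_product] at *
    exact ⟨⟨hp.1.2, hp.1.1⟩, hp.2.symm⟩
  · intro p hp q hq h
    have h1 : p.2 = q.2 := congrArg Prod.fst h
    have h2 : p.1 = q.1 := congrArg Prod.snd h
    exact Prod.ext h2 h1
  · intro p hp
    refine ⟨(p.2, p.1), ?_, rfl⟩
    simp only [Finset.mem_filter, Finset.mem_product] at *
    exact ⟨⟨hp.1.2, hp.1.1⟩, hp.2.symm⟩

lemma eCount_union_le {V : Type*} [Fintype V] [DecidableEq V] (G : SimpleGraph V)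
    (S T : Finset V) :
    eCount G (S ∪ T) (S ∪ T)ᶜ ≤ eCount G S Sᶜ + eCount G T Tᶜ := by
  unfold eCount
  refine le_trans (Finset.card_le_card ?_) (Finset.card_union_le _ _)
  intro p hp
  simp only [Finset.mem_filter, Finset.mem_product, Finset.mem_union, Finset.mem_compl,
    Finset.mem_union] at *
  obtain ⟨⟨h1, h2⟩, hadj⟩ := hp
  push_neg at h2
  rcases h1 with h | h
  · exact Or.inl ⟨⟨h, h2.1⟩, hadj⟩
  · exact Or.inr ⟨⟨h, h2.2⟩, hadj⟩

lemma eCount_empty {V : Type*} [Fintype V] [DecidableEq V] (G : SimpleGraph V) (T : Finset V) :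
    eCount G ∅ T = 0 := by
  simp [eCount]

set_option maxHeartbeats 1600000 in
theorem cut_matching :
    ∃ c₀ c₁ : ℝ, 0 < c₀ ∧ 0 < c₁ ∧
      ∀ (V : Type) [Fintype V] [DecidableEq V] (G : SimpleGraph V) (φ : ℝ),
        2 ≤ G.edgeFinset.card → 0 < φ → φ < 1 →
        -- case (1): G has conductance Φ_G ≥ φ
        (∀ S : Finset V, S.Nonempty → S ≠ Finset.univ →
          φ * min (vol G S : ℝ) (vol G Sᶜ : ℝ) ≤ (eCount G S Sᶜ : ℝ)) ∨
        -- case (2): a relatively balanced cut of conductance O(φ log² m)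
        (∃ A : Finset V,
          (eCount G Aᶜ A : ℝ) ≤
            c₀ * φ * (Real.log G.edgeFinset.card) ^ 2 * min (vol G Aᶜ : ℝ) (vol G A : ℝ) ∧
          (G.edgeFinset.card : ℝ) / (c₁ * (Real.log G.edgeFinset.card) ^ 2) ≤
            min (vol G A : ℝ) (vol G Aᶜ : ℝ)) ∨
        -- case (3): a very unbalanced cut whose large side is a nearly φ expander
        (∃ A : Finset V,
          (eCount G Aᶜ A : ℝ) ≤
            c₀ * φ * (Real.log G.edgeFinset.card) ^ 2 * min (vol G Aᶜ : ℝ) (vol G A : ℝ) ∧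
          (vol G Aᶜ : ℝ) ≤
            (G.edgeFinset.card : ℝ) / (10 * c₀ * (Real.log G.edgeFinset.card) ^ 2) ∧
          (∀ S ⊆ A, (vol G S : ℝ) ≤ (vol G A : ℝ) / 2 →
            φ * (vol G S : ℝ) ≤ (eCount G S Sᶜ : ℝ))) := by
  refine ⟨5, 50, by norm_num, by norm_num, ?_⟩
  intro V _ _ G φ hm hφ0 _hφ1
  set M : ℝ := (G.edgeFinset.card : ℝ) with hMdef
  set L : ℝ := (Real.log G.edgeFinset.card) ^ 2 with hLdef
  have hM2 : (2 : ℝ) ≤ M := by rw [hMdef]; exact_mod_cast hm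
  have hMpos : 0 < M := by linarith
  have hlog2 : (0.69 : ℝ) < Real.log 2 := by
    have := Real.log_two_gt_d9; linarith
  have hlogM : (0.69 : ℝ) ≤ Real.log M := by
    have : Real.log 2 ≤ Real.log M := Real.log_le_log (by norm_num) hM2
    linarith
  have hL4 : (0.4 : ℝ) ≤ L := by
    rw [hLdef]; nlinarith [hlogM]
  have hLpos : 0 < L := by linarith
  have hvoluniv : (vol G (univ : Finset V) : ℝ) = 2 * M := by
    unfold vol
    rw [hMdef]
    exact_mod_cast G.sum_degrees_eq_twice_card_edges
  have hvolcompl : ∀ S : Finset V, (vol G Sᶜ : ℝ) = 2 * M - vol G S := by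
    intro S
    have h0 : vol G S + vol G Sᶜ = vol G (univ : Finset V) := by
      unfold vol; exact Finset.sum_add_sum_compl S _
    have h' : (vol G S : ℝ) + vol G Sᶜ = 2 * M := by
      rw [← hvoluniv]; exact_mod_cast h0
    linarith
  have hvolnn : ∀ S : Finset V, (0 : ℝ) ≤ vol G S := fun S => Nat.cast_nonneg _
  have hecnn : ∀ S T : Finset V, (0 : ℝ) ≤ eCount G S T := fun S T => Nat.cast_nonneg _
  by_cases hexp : ∀ S : Finset V, (vol G S : ℝ) ≤ M → φ * vol G S ≤ eCount G S Sᶜ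
  · -- case (3) with A = univ
    right; right
    refine ⟨univ, ?_, ?_, ?_⟩
    · rw [compl_univ, eCount_empty]
      have h1 : (vol G (∅ : Finset V) : ℝ) = 0 := by simp [vol]
      rw [h1, min_eq_left (hvolnn (univ : Finset V))]
      simp
    · rw [compl_univ]
      have h1 : (vol G (∅ : Finset V) : ℝ) = 0 := by simp [vol]
      rw [h1]
      positivity
    · intro S _ hS
      apply hexp
      rw [hvoluniv] at hS
      linarith
  · push_neg at hexp
    obtain ⟨S₀, hS₀vol, hS₀cut⟩ := hexp
    set F : Finset (Finset V) :=
      univ.filter (fun S : Finset V => (vol G S : ℝ) ≤ M ∧ (eCount G S Sᶜ : ℝ) ≤ φ * vol G S)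
      with hFdef
    have hS₀F : S₀ ∈ F := by
      rw [hFdef]; simp only [Finset.mem_filter, Finset.mem_univ, true_and]
      exact ⟨hS₀vol, le_of_lt hS₀cut⟩
    obtain ⟨S, hSF, hSmax⟩ := Finset.exists_max_image F (fun S => vol G S) ⟨S₀, hS₀F⟩
    rw [hFdef] at hSF
    simp only [Finset.mem_filter, Finset.mem_univ, true_and] at hSF
    obtain ⟨hSvol, hScut⟩ := hSF
    by_cases hbig : M / (50 * L) ≤ (vol G S : ℝ)
    · -- case (2) with A = Sᶜ
      right; left
      refine ⟨Sᶜ, ?_, ?_⟩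
      · rw [compl_compl]
        have hmin : min (vol G S : ℝ) (vol G Sᶜ : ℝ) = vol G S := by
          apply min_eq_left
          rw [hvolcompl S]; linarith
        rw [hmin]
        nlinarith [hvolnn S]
      · have hmin : min (vol G Sᶜᶜ : ℝ) (vol G Sᶜ : ℝ) = vol G S := by
          rw [compl_compl]
          apply min_eq_left
          rw [hvolcompl S]; linarith
        rw [min_comm] at hmin
        rw [hmin]
        exact hbig
    · push_neg at hbig
      by_cases hT : ∃ T : Finset V, T ⊆ Sᶜ ∧ (vol G T : ℝ) ≤ (vol G Sᶜ : ℝ) / 2 ∧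
          (eCount G T Tᶜ : ℝ) < φ * vol G T
      · obtain ⟨T, hTsub, hThalf, hTcut⟩ := hT
        have hdisj : Disjoint S T := by
          rw [Finset.disjoint_left]
          intro a haS haT
          exact (Finset.mem_compl.mp (hTsub haT)) haS
        have hvolU : (vol G (S ∪ T) : ℝ) = vol G S + vol G T := by
          unfold vol
          rw [Finset.sum_union hdisj]
          push_cast; ring
        have hTpos : (0 : ℝ) < vol G T := by
          by_contra h
          push_neg at h
          have h1 : (vol G T : ℝ) = 0 := le_antisymm h (hvolnn T)
          rw [h1, mul_zero] at hTcut
          exact absurd hTcut (not_lt.mpr (hecnn T Tᶜ))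
        have hδU : (eCount G (S ∪ T) (S ∪ T)ᶜ : ℝ) ≤ φ * vol G (S ∪ T) := by
          have h1 : (eCount G (S ∪ T) (S ∪ T)ᶜ : ℝ) ≤ eCount G S Sᶜ + eCount G T Tᶜ := by
            exact_mod_cast eCount_union_le G S T
          rw [hvolU]
          nlinarith
        by_cases hU : (vol G (S ∪ T) : ℝ) ≤ M
        · exfalso
          have hUF : S ∪ T ∈ F := by
            rw [hFdef]; simp only [Finset.mem_filter, Finset.mem_univ, true_and]
            exact ⟨hU, hδU⟩
          have h1 := hSmax _ hUF
          have h2 : (vol G (S ∪ T) : ℝ) ≤ vol G S := by exact_mod_cast h1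
          rw [hvolU] at h2
          linarith
        · push_neg at hU
          right; left
          have hvolW : (vol G (S ∪ T)ᶜ : ℝ) = 2 * M - vol G (S ∪ T) := hvolcompl (S ∪ T)
          have hUup : (vol G (S ∪ T) : ℝ) ≤ 41 / 40 * M := by
            have h1 : (vol G T : ℝ) ≤ M - vol G S / 2 := by
              rw [hvolcompl S] at hThalf; linarith
            have h2 : (vol G S : ℝ) ≤ M / 20 := by
              have h3 : M / (50 * L) ≤ M / 20 := by
                apply div_le_div_of_nonneg_left hMpos.le (by norm_num)
                nlinarith
              linarith
            rw [hvolU]; linarith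
          have hWlow : (39 / 40 : ℝ) * M ≤ vol G (S ∪ T)ᶜ := by
            rw [hvolW]; linarith
          refine ⟨S ∪ T, ?_, ?_⟩
          · have hmin : min (vol G (S ∪ T)ᶜ : ℝ) (vol G (S ∪ T) : ℝ) = vol G (S ∪ T)ᶜ := by
              apply min_eq_left
              rw [hvolW]; linarith
            rw [hmin]
            have hδW : (eCount G (S ∪ T)ᶜ (S ∪ T) : ℝ) = eCount G (S ∪ T) (S ∪ T)ᶜ := by
              exact_mod_cast eCount_comm G (S ∪ T)ᶜ (S ∪ T)
            rw [hδW]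
            have h2W : (vol G (S ∪ T) : ℝ) ≤ 2 * vol G (S ∪ T)ᶜ := by
              rw [hvolW]; linarith
            have p1 := mul_le_mul_of_nonneg_left h2W hφ0.le
            have p2 : (0 : ℝ) ≤ φ * (vol G (S ∪ T)ᶜ : ℝ) :=
              mul_nonneg hφ0.le (hvolnn _)
            nlinarith [hδU, p1, p2, hL4]
          · have hmin : min (vol G (S ∪ T) : ℝ) (vol G (S ∪ T)ᶜ : ℝ) = vol G (S ∪ T)ᶜ := by
              apply min_eq_right
              rw [hvolW]; linarith
            rw [hmin]
            have h3 : M / (50 * L) ≤ M / 20 := by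
              apply div_le_div_of_nonneg_left hMpos.le (by norm_num)
              nlinarith
            linarith
      · push_neg at hT
        right; right
        refine ⟨Sᶜ, ?_, ?_, ?_⟩
        · rw [compl_compl]
          have hmin : min (vol G S : ℝ) (vol G Sᶜ : ℝ) = vol G S := by
            apply min_eq_left
            rw [hvolcompl S]; linarith
          rw [hmin]
          nlinarith [hvolnn S]
        · rw [compl_compl]
          have h5 : (10 : ℝ) * 5 * L = 50 * L := by ring
          rw [h5]
          linarith
        · intro T hTsub hThalf
          have h1 := hT T hTsub (by linarith)
          linarith
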